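/- arXiv:1906.09329 — 3 statements merged into one kernel-verified Lean document; each statement's English description precedes it below -/
import Mathlib

section
/- Let Φ be an m×n real matrix, b ∈ ℝᵐ, and let x* ∈ ℝⁿ be a solution of (P₀): Φx* = b and ‖x*‖₀ ≤ ‖x‖₀ for every x with Φx = b. Let ŵ ∈ ℝⁿ satisfy ŵᵢ ≥ 0 for all i and (ŵᵢ = 0 ⟺ x*ᵢ ≠ 0). Then every minimizer x^ŵ of the weighted ℓ₁ problem with weights ŵ (i.e., Φx^ŵ = b and Σᵢ ŵᵢ|x^ŵᵢ| ≤ Σᵢ ŵᵢ|xᵢ| for all x with Φx = b) is itself a solution of (P₀): ‖x^ŵ‖₀ ≤ ‖x‖₀ for every x with Φx = b. -/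
/-- The ℓ₀ pseudo-norm: the number of nonzero coordinates of `x`. -/
noncomputable def normZero {n : ℕ} (x : Fin n → ℝ) : ℕ :=
  (Finset.univ.filter fun i => x i ≠ 0).card

/-- If `x*` solves (P₀) and `ŵ ≥ 0` vanishes exactly on the support of `x*`,
then every minimizer of the weighted ℓ₁ problem with weights `ŵ` also
solves (P₀). -/
theorem weighted_l1_solves_P0 {m n : ℕ} (Φ : Matrix (Fin m) (Fin n) ℝ)
    (b : Fin m → ℝ) (xs : Fin n → ℝ) (hxs : Φ.mulVec xs = b)
    (hxs0 : ∀ x : Fin n → ℝ, Φ.mulVec x = b → normZero xs ≤ normZero x)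
    (wh : Fin n → ℝ) (hwh : ∀ i, 0 ≤ wh i) (hwh0 : ∀ i, wh i = 0 ↔ xs i ≠ 0)
    (xw : Fin n → ℝ) (hxw : Φ.mulVec xw = b)
    (hmin : ∀ x : Fin n → ℝ, Φ.mulVec x = b →
      ∑ i, wh i * |xw i| ≤ ∑ i, wh i * |x i|) :
    ∀ x : Fin n → ℝ, Φ.mulVec x = b → normZero xw ≤ normZero x := by
  intro x hx
  -- key: support xw ⊆ support xs
  have hsum : ∑ i, wh i * |xs i| = 0 := by
    apply Finset.sum_eq_zero
    intro i _
    by_cases h : xs i = 0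
    · simp [h]
    · have := (hwh0 i).mpr h
      simp [this]
  have hle : ∑ i, wh i * |xw i| ≤ 0 := hsum ▸ hmin xs hxs
  have hzero : ∀ i, wh i * |xw i| = 0 := by
    have hnn : ∀ i ∈ Finset.univ, (0:ℝ) ≤ wh i * |xw i| := fun i _ =>
      mul_nonneg (hwh i) (abs_nonneg _)
    have := (Finset.sum_eq_zero_iff_of_nonneg hnn).mp
      (le_antisymm hle (Finset.sum_nonneg hnn))
    exact fun i => this i (Finset.mem_univ i)
  have hsub : ∀ i, xw i ≠ 0 → xs i ≠ 0 := by
    intro i hi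
    by_contra h
    have hw : wh i ≠ 0 := fun hw0 => ((hwh0 i).mp hw0) h
    have := hzero i
    rcases mul_eq_zero.mp this with h1 | h1
    · exact hw h1
    · exact hi (abs_eq_zero.mp h1)
  calc normZero xw ≤ normZero xs := by
        apply Finset.card_le_card
        intro i hi
        simp only [Finset.mem_filter, Finset.mem_univ, true_and] at *
        exact hsub i hi
    _ ≤ normZero x := hxs0 x hx
end

section
/- Let Φ be an m×n real matrix, b ∈ ℝᵐ, and let x* ∈ ℝⁿ be a solution of (P₀): Φx* = b and ‖x*‖₀ ≤ ‖x‖₀ for every x with Φx = b. Then there exists ŵ ∈ ℝⁿ with ŵᵢ ≥ 0 for all i such that: (a) every minimizer of the weighted ℓ₁ problem min{ Σᵢ ŵᵢ|xᵢ| : Φx = b } is a solution of (P₀), and (b) ŵ is a dual optimal point, i.e., d(ŵ) = 0 where d(w) = inf{ Σᵢ wᵢ|xᵢ| : Φx = b } − Σᵢ wᵢ|x*ᵢ| and 0 is the dual optimal value. -/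
/-- The noiseless dual function `d(w) = inf { Σᵢ wᵢ|xᵢ| : Φx = b } − Σᵢ wᵢ|x*ᵢ|`. -/
noncomputable def dualFn {m n : ℕ} (Φ : Matrix (Fin m) (Fin n) ℝ) (b : Fin m → ℝ)
    (xs : Fin n → ℝ) (w : Fin n → ℝ) : ℝ :=
  sInf {y : ℝ | ∃ x : Fin n → ℝ, Φ.mulVec x = b ∧ y = ∑ i, w i * |x i|}
    - ∑ i, w i * |xs i|

/-- If `x*` solves (P₀), then there exist useful weights `ŵ ≥ 0`: every
minimizer of the associated weighted ℓ₁ problem solves (P₀), and `ŵ` is a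
dual optimal point (`d(ŵ) = 0`, the dual optimal value). -/
theorem useful_dual_weights_exist {m n : ℕ} (Φ : Matrix (Fin m) (Fin n) ℝ)
    (b : Fin m → ℝ) (xs : Fin n → ℝ) (hxs : Φ.mulVec xs = b)
    (hxs0 : ∀ x : Fin n → ℝ, Φ.mulVec x = b → normZero xs ≤ normZero x) :
    ∃ wh : Fin n → ℝ, (∀ i, 0 ≤ wh i) ∧
      (∀ xw : Fin n → ℝ, Φ.mulVec xw = b →
        (∀ x : Fin n → ℝ, Φ.mulVec x = b →
          ∑ i, wh i * |xw i| ≤ ∑ i, wh i * |x i|) →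
        ∀ x : Fin n → ℝ, Φ.mulVec x = b → normZero xw ≤ normZero x) ∧
      dualFn Φ b xs wh = 0 := by
  classical
  set wh : Fin n → ℝ := fun i => if xs i = 0 then 1 else 0 with hwh
  have hnn : ∀ i, 0 ≤ wh i := by
    intro i; simp only [hwh]; split <;> norm_num
  have hterm : ∀ (x : Fin n → ℝ) (i : Fin n), 0 ≤ wh i * |x i| :=
    fun x i => mul_nonneg (hnn i) (abs_nonneg _)
  have hsum_nonneg : ∀ x : Fin n → ℝ, 0 ≤ ∑ i, wh i * |x i| :=
    fun x => Finset.sum_nonneg fun i _ => hterm x i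
  have hxs_sum : ∑ i, wh i * |xs i| = 0 := by
    apply Finset.sum_eq_zero
    intro i _
    simp only [hwh]
    by_cases h : xs i = 0 <;> simp [h]
  refine ⟨wh, hnn, ?_, ?_⟩
  · intro xw hxw hmin x hx
    have h0 : ∑ i, wh i * |xw i| = 0 :=
      le_antisymm (by simpa [hxs_sum] using hmin xs hxs) (hsum_nonneg xw)
    have hsupp : ∀ i, xw i ≠ 0 → xs i ≠ 0 := by
      intro i hi hxsi
      have := (Finset.sum_eq_zero_iff_of_nonneg (fun i _ => hterm xw i)).1 h0 i
        (Finset.mem_univ i)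
      rw [hwh] at this
      simp only [hxsi, if_pos, one_mul, abs_eq_zero] at this
      exact hi this
    have h1 : normZero xw ≤ normZero xs := by
      apply Finset.card_le_card
      intro i hi
      simp only [Finset.mem_filter, Finset.mem_univ, true_and] at hi ⊢
      exact hsupp i hi
    exact h1.trans (hxs0 x hx)
  · have : sInf {y : ℝ | ∃ x : Fin n → ℝ, Φ.mulVec x = b ∧ y = ∑ i, wh i * |x i|} = 0 := by
      apply le_antisymm
      · exact csInf_le ⟨0, fun y ⟨x, _, hy⟩ => hy ▸ hsum_nonneg x⟩
          ⟨xs, hxs, hxs_sum.symm⟩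
      · exact le_csInf ⟨_, xs, hxs, rfl⟩ fun y ⟨x, _, hy⟩ => hy ▸ hsum_nonneg x
    simp [dualFn, this, hxs_sum]
end

section
/- Let Φ be an m×n real matrix, b ∈ ℝᵐ, η ≥ 0, and let x* ∈ ℝⁿ be a solution of the noisy problem (P₀^η): ‖Φx* − b‖₂² ≤ η² and ‖x*‖₀ ≤ ‖x‖₀ for every x with ‖Φx − b‖₂² ≤ η². Let ŵ ∈ ℝⁿ satisfy ŵᵢ ≥ 0 for all i and (ŵᵢ = 0 ⟺ x*ᵢ ≠ 0). Then every minimizer x^ŵ of the noisy weighted ℓ₁ problem (i.e., ‖Φx^ŵ − b‖₂² ≤ η² and Σᵢ ŵᵢ|x^ŵᵢ| ≤ Σᵢ ŵᵢ|xᵢ| for all x with ‖Φx − b‖₂² ≤ η²) is itself a solution of (P₀^η): ‖x^ŵ‖₀ ≤ ‖x‖₀ for every x with ‖Φx − b‖₂² ≤ η². -/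
/-- If `x*` solves the noisy problem (P₀^η) and `ŵ ≥ 0` vanishes exactly on the
support of `x*`, then every minimizer of the noisy weighted ℓ₁ problem with
weights `ŵ` also solves (P₀^η). -/
theorem noisy_weighted_l1_solves_P0 {m n : ℕ} (Φ : Matrix (Fin m) (Fin n) ℝ)
    (b : Fin m → ℝ) (η : ℝ) (hη : 0 ≤ η)
    (xs : Fin n → ℝ) (hxs : (∑ j, (Φ.mulVec xs j - b j) ^ 2) ≤ η ^ 2)
    (hxs0 : ∀ x : Fin n → ℝ, (∑ j, (Φ.mulVec x j - b j) ^ 2) ≤ η ^ 2 →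
      normZero xs ≤ normZero x)
    (wh : Fin n → ℝ) (hwh : ∀ i, 0 ≤ wh i) (hwh0 : ∀ i, wh i = 0 ↔ xs i ≠ 0)
    (xw : Fin n → ℝ) (hxw : (∑ j, (Φ.mulVec xw j - b j) ^ 2) ≤ η ^ 2)
    (hmin : ∀ x : Fin n → ℝ, (∑ j, (Φ.mulVec x j - b j) ^ 2) ≤ η ^ 2 →
      ∑ i, wh i * |xw i| ≤ ∑ i, wh i * |x i|) :
    ∀ x : Fin n → ℝ, (∑ j, (Φ.mulVec x j - b j) ^ 2) ≤ η ^ 2 →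
      normZero xw ≤ normZero x := by
  intro x hx
  -- weighted ℓ₁ norm of xs is 0
  have hsum0 : ∑ i, wh i * |xs i| = 0 := by
    apply Finset.sum_eq_zero
    intro i _
    by_cases h : xs i = 0
    · simp [h]
    · rw [(hwh0 i).mpr h, zero_mul]
  have hle : ∑ i, wh i * |xw i| ≤ 0 := hsum0 ▸ hmin xs hxs
  have hterm : ∀ i ∈ Finset.univ, wh i * |xw i| = 0 := by
    apply (Finset.sum_eq_zero_iff_of_nonneg ?_).mp
    · exact le_antisymm hle (Finset.sum_nonneg fun i _ =>
        mul_nonneg (hwh i) (abs_nonneg _))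
    · exact fun i _ => mul_nonneg (hwh i) (abs_nonneg _)
  -- support of xw ⊆ support of xs
  have hsub : (Finset.univ.filter fun i => xw i ≠ 0) ⊆
      (Finset.univ.filter fun i => xs i ≠ 0) := by
    intro i hi
    simp only [Finset.mem_filter, Finset.mem_univ, true_and] at hi ⊢
    have := hterm i (Finset.mem_univ i)
    rcases mul_eq_zero.mp this with h | h
    · exact (hwh0 i).mp h
    · exact absurd (abs_eq_zero.mp h) hi
  calc normZero xw ≤ normZero xs := Finset.card_le_card hsub
    _ ≤ normZero x := hxs0 x hx
end
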